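/- Let μ be a finite Borel measure on ℝ with μ((−∞,0]) = 0 and let π : ℝ → [0,∞) be Lebesgue-integrable with π = 0 on (−∞,0]. Then for every x > 0, ∫_0^x ( ∫_ℝ π(z−u) dμ(u) − μ(ℝ) π(z) ) dz = − ∫_0^x μ((x−z,∞)) π(z) dz. -/

import Mathlib

open MeasureTheory Set Filter Function




lemma keyU (p : ℝ → ℝ) (hp_int : Integrable p) (hpz : ∀ y ≤ 0, p y = 0)
    (x : ℝ) (hx : 0 < x) (u : ℝ) (hu : 0 < u) :
    (∫ z in Ioo 0 x, p (z - u)) - ∫ z in Ioo 0 x, p z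
      = -(∫ z in Ioo (max (x - u) 0) x, p z) := by
  have hii : ∀ a b : ℝ, IntervalIntegrable p volume a b := fun a b =>
    hp_int.intervalIntegrable
  have hIoo : ∀ a b : ℝ, a ≤ b → (∫ z in Ioo a b, p z) = ∫ z in a..b, p z := by
    intro a b hab
    rw [intervalIntegral.integral_of_le hab, integral_Ioc_eq_integral_Ioo]
  have hmaxle : max (x - u) 0 ≤ x := max_le (by linarith) hx.le
  have h1 : (∫ z in Ioo 0 x, p (z - u)) = ∫ z in (-u)..(x - u), p z := by
    rw [show (∫ z in Ioo 0 x, p (z - u)) = ∫ z in (0:ℝ)..x, p (z - u) by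
      rw [intervalIntegral.integral_of_le hx.le, integral_Ioc_eq_integral_Ioo],
      intervalIntegral.integral_comp_sub_right p u, zero_sub]
  have hA : (∫ z in (-u)..(0:ℝ), p z) = 0 := by
    have : EqOn p 0 (uIcc (-u) 0) := by
      intro y hy
      rw [uIcc_of_le (by linarith)] at hy
      exact hpz y hy.2
    rw [intervalIntegral.integral_congr this]; simp
  have hB : (∫ z in (-u)..(x - u), p z)
      = (∫ z in (-u)..(0:ℝ), p z) + ∫ z in (0:ℝ)..(x - u), p z :=
    (intervalIntegral.integral_add_adjacent_intervals (hii _ _) (hii _ _)).symm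
  have hC : (∫ z in (0:ℝ)..(x - u), p z) + ∫ z in (x - u)..x, p z
      = ∫ z in (0:ℝ)..x, p z :=
    intervalIntegral.integral_add_adjacent_intervals (hii _ _) (hii _ _)
  have hD : (∫ z in (x - u)..(max (x - u) 0), p z) = 0 := by
    rcases le_or_gt (x - u) 0 with h | h
    · rw [max_eq_right h]
      have : EqOn p 0 (uIcc (x - u) 0) := by
        intro y hy
        rw [uIcc_of_le h] at hy
        exact hpz y hy.2
      rw [intervalIntegral.integral_congr this]; simp
    · rw [max_eq_left h.le, intervalIntegral.integral_same]
  have hE : (∫ z in (x - u)..x, p z) = ∫ z in (max (x - u) 0)..x, p z := by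
    rw [← intervalIntegral.integral_add_adjacent_intervals (hii (x - u) (max (x - u) 0))
      (hii (max (x - u) 0) x), hD, zero_add]
  rw [hIoo 0 x hx.le, hIoo _ x hmaxle, h1, hB, hA, zero_add, ← hE]
  linarith



lemma integrable_comp_fst_prod (ν μ : Measure ℝ) [SFinite ν] [IsFiniteMeasure μ]
    (p : ℝ → ℝ) (hpm : Measurable p) (hpi : Integrable p ν) :
    Integrable (fun zu : ℝ × ℝ => p zu.1) (ν.prod μ) := by
  have hm : AEStronglyMeasurable (fun zu : ℝ × ℝ => p zu.1) (ν.prod μ) :=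
    (hpm.comp measurable_fst).aestronglyMeasurable
  rw [integrable_prod_iff hm]
  refine ⟨Eventually.of_forall fun z => by simpa using integrable_const (μ := μ) (p z), ?_⟩
  simp only [integral_const, smul_eq_mul]
  exact hpi.norm.const_mul _

lemma H'_int (μ : Measure ℝ) [IsFiniteMeasure μ] (s : Set ℝ)
    (p : ℝ → ℝ) (hpm : Measurable p) (hp_int : Integrable p) :
    Integrable (fun uz : ℝ × ℝ => p (uz.2 - uz.1)) (μ.prod (volume.restrict s)) := by
  have hm : AEStronglyMeasurable (fun uz : ℝ × ℝ => p (uz.2 - uz.1))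
      (μ.prod (volume.restrict s)) :=
    (hpm.comp (measurable_snd.sub measurable_fst)).aestronglyMeasurable
  rw [integrable_prod_iff hm]
  constructor
  · exact Eventually.of_forall fun u => (hp_int.comp_sub_right u).restrict
  · have hsm : StronglyMeasurable fun u : ℝ => ∫ z in s, ‖p (z - u)‖ := by
      exact ((hpm.comp (measurable_snd.sub measurable_fst)).norm.stronglyMeasurable
        ).integral_prod_right'
    refine (integrable_const (∫ z, ‖p z‖)).mono hsm.aestronglyMeasurable
      (Eventually.of_forall fun u => ?_)
    have h1 : (∫ z in s, ‖p (z - u)‖) ≤ ∫ z, ‖p (z - u)‖ :=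
      integral_mono_measure Measure.restrict_le_self
        (Eventually.of_forall fun z => norm_nonneg _) (hp_int.comp_sub_right u).norm
    have h2 : (∫ z, ‖p (z - u)‖) = ∫ z, ‖p z‖ :=
      integral_sub_right_eq_self (fun z => ‖p z‖) u
    rw [Real.norm_of_nonneg (integral_nonneg fun z => norm_nonneg _),
      Real.norm_of_nonneg (integral_nonneg fun z => norm_nonneg _)]
    linarith




lemma main_key (μ : Measure ℝ) [IsFiniteMeasure μ] (hμ : μ (Iic 0) = 0)
    (p : ℝ → ℝ) (hpm : Measurable p) (hp_int : Integrable p)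
    (hpz : ∀ y ≤ 0, p y = 0) (x : ℝ) (hx : 0 < x) :
    ∫ z in Ioo 0 x, ((∫ u, p (z - u) ∂μ) - (μ univ).toReal * p z)
      = -∫ z in Ioo 0 x, (μ (Ioi (x - z))).toReal * p z := by
  have H' := H'_int μ (Ioo 0 x) p hpm hp_int
  have H : Integrable (fun zu : ℝ × ℝ => p (zu.1 - zu.2))
      ((volume.restrict (Ioo 0 x)).prod μ) := H'.swap
  have hgm : Measurable (fun zu : ℝ × ℝ => if x - zu.1 < zu.2 then p zu.1 else 0) :=
    Measurable.ite (measurableSet_lt (measurable_const.sub measurable_fst) measurable_snd)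
      (hpm.comp measurable_fst) measurable_const
  have HG : Integrable (fun zu : ℝ × ℝ => if x - zu.1 < zu.2 then p zu.1 else 0)
      ((volume.restrict (Ioo 0 x)).prod μ) := by
    refine (integrable_comp_fst_prod _ μ p hpm hp_int.restrict).mono
      hgm.aestronglyMeasurable (Eventually.of_forall fun zu => ?_)
    by_cases h : x - zu.1 < zu.2 <;> simp [h]
  have hupos : ∀ᵐ u ∂μ, 0 < u := by
    rw [ae_iff]
    convert hμ using 2
    ext u; simp [not_lt]
  have key1 : (∫ z in Ioo 0 x, ((∫ u, p (z - u) ∂μ) - (μ univ).toReal * p z))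
      = -∫ u, (∫ z in Ioo (max (x - u) 0) x, p z) ∂μ := by
    rw [integral_sub H.integral_prod_left (hp_int.restrict.const_mul _)]
    rw [integral_integral_swap (f := fun z u => p (z - u)) H]
    rw [integral_const_mul]
    rw [show (μ univ).toReal * (∫ z in Ioo 0 x, p z)
        = ∫ _ : ℝ, (∫ z in Ioo 0 x, p z) ∂μ by rw [integral_const, smul_eq_mul]; rfl]
    rw [← integral_sub H'.integral_prod_left (integrable_const _)]
    rw [← integral_neg]
    refine integral_congr_ae ?_
    filter_upwards [hupos] with u hu
    exact keyU p hp_int hpz x hx u hu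
  have key2 : (∫ z in Ioo 0 x, (μ (Ioi (x - z))).toReal * p z)
      = ∫ u, (∫ z in Ioo (max (x - u) 0) x, p z) ∂μ := by
    have hR : ∀ z : ℝ, (μ (Ioi (x - z))).toReal * p z
        = ∫ u, (if x - z < u then p z else 0) ∂μ := by
      intro z
      have h : (fun u => if x - z < u then p z else 0)
          = (Ioi (x - z)).indicator (fun _ => p z) := by
        ext u; simp [indicator_apply, mem_Ioi]
      rw [h, integral_indicator_const _ measurableSet_Ioi, smul_eq_mul]
      rfl
    simp_rw [hR]
    rw [integral_integral_swap (f := fun z u => if x - z < u then p z else 0) HG]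
    have hperu : ∀ u : ℝ, (∫ z in Ioo 0 x, (if x - z < u then p z else 0))
        = ∫ z in Ioo (max (x - u) 0) x, p z := by
      intro u
      have h1 : (fun z => if x - z < u then p z else 0) = (Ioi (x - u)).indicator p := by
        ext z; simp [indicator_apply, mem_Ioi, sub_lt_comm]
      have hset : Ioi (x - u) ∩ Ioo 0 x = Ioo (max (x - u) 0) x := by
        ext z
        simp only [mem_inter_iff, mem_Ioi, mem_Ioo, max_lt_iff]
        tauto
      rw [h1, integral_indicator measurableSet_Ioi,
        Measure.restrict_restrict measurableSet_Ioi, hset]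
    exact integral_congr_ae (Eventually.of_forall hperu)
  rw [key1, key2]


/-- representation of the signed-integrated-tail convolution as the
primitive of `μ*π − |μ|π` (equation (eq_phi1) of the paper). -/
theorem integral_convolution_sub_total_mass_eq_neg_tail_convolution
    (μ : Measure ℝ) [IsFiniteMeasure μ] (hμ : μ (Iic 0) = 0)
    (π : ℝ → ℝ) (hπ_int : Integrable π) (hπ_nonneg : ∀ x, 0 ≤ π x)
    (hπ_zero : ∀ x ≤ 0, π x = 0)
    (x : ℝ) (hx : 0 < x) :
    ∫ z in Ioo 0 x, ((∫ u, π (z - u) ∂μ) - (μ univ).toReal * π z)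
      = -∫ z in Ioo 0 x, (μ (Ioi (x - z))).toReal * π z := by
  obtain ⟨p, hp_sm, hπp⟩ := hπ_int.aestronglyMeasurable
  set q : ℝ → ℝ := fun y => if y ≤ 0 then 0 else max (p y) 0 with hqdef
  have hqm : Measurable q :=
    Measurable.ite measurableSet_Iic measurable_const
      (hp_sm.measurable.max measurable_const)
  have hπq : π =ᵐ[volume] q := by
    filter_upwards [hπp] with y hy
    by_cases h : y ≤ 0
    · simp [hqdef, h, hπ_zero y h]
    · simp [hqdef, h, ← hy, max_eq_left (hπ_nonneg y)]
  have hqz : ∀ y ≤ 0, q y = 0 := fun y h => by simp [hqdef, h]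
  have hq_int : Integrable q := hπ_int.congr hπq
  -- the inner integrals agree for a.e. z
  have hN : ∀ᵐ z ∂(volume : Measure ℝ), (∫ u, π (z - u) ∂μ) = ∫ u, q (z - u) ∂μ := by
    set N := toMeasurable volume {y | π y ≠ q y} with hNdef
    have hNm : MeasurableSet N := measurableSet_toMeasurable _ _
    have hN0 : volume N = 0 := by
      rw [hNdef, measure_toMeasurable]
      exact hπq
    have hSm : MeasurableSet {w : ℝ × ℝ | w.2 - w.1 ∈ N} :=
      (measurable_snd.sub measurable_fst) hNm
    have hS' : (μ.prod volume) {w : ℝ × ℝ | w.2 - w.1 ∈ N} = 0 := by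
      rw [Measure.prod_apply hSm]
      have hsec : ∀ u : ℝ, volume {a : ℝ | a - u ∈ N} = 0 := by
        intro u
        have h : {a : ℝ | a - u ∈ N} = (fun z => z + -u) ⁻¹' N := by
          ext z; simp [sub_eq_add_neg]
        rw [h, measure_preimage_add_right, hN0]
      simp only [preimage_setOf_eq]
      simp [hsec]
    have hS : (volume.prod μ) {w : ℝ × ℝ | w.1 - w.2 ∈ N} = 0 := by
      have hSm2 : MeasurableSet {w : ℝ × ℝ | w.1 - w.2 ∈ N} :=
        (measurable_fst.sub measurable_snd) hNm
      have hswap : (volume.prod μ) {w : ℝ × ℝ | w.1 - w.2 ∈ N}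
          = (μ.prod volume) {w : ℝ × ℝ | w.2 - w.1 ∈ N} := by
        conv_lhs => rw [← Measure.prod_swap]
        rw [Measure.map_apply measurable_swap hSm2]
        congr 1
      rw [hswap, hS']
    have hae : ∀ᵐ w ∂(volume.prod μ : Measure (ℝ × ℝ)), w.1 - w.2 ∉ N := by
      rw [ae_iff]
      simpa [not_not] using hS
    have hae2 := Measure.ae_ae_of_ae_prod hae
    filter_upwards [hae2] with z hz
    refine integral_congr_ae ?_
    filter_upwards [hz] with u hu
    by_contra hne
    exact hu (subset_toMeasurable _ _ hne)
  have hLHS : ∫ z in Ioo 0 x, ((∫ u, π (z - u) ∂μ) - (μ univ).toReal * π z)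
      = ∫ z in Ioo 0 x, ((∫ u, q (z - u) ∂μ) - (μ univ).toReal * q z) := by
    refine integral_congr_ae (ae_restrict_of_ae ?_)
    filter_upwards [hN, hπq] with z h1 h2
    rw [h1, h2]
  have hRHS : ∫ z in Ioo 0 x, (μ (Ioi (x - z))).toReal * π z
      = ∫ z in Ioo 0 x, (μ (Ioi (x - z))).toReal * q z := by
    refine integral_congr_ae (ae_restrict_of_ae ?_)
    filter_upwards [hπq] with z h2
    rw [h2]
  rw [hLHS, hRHS]
  exact main_key μ hμ q hqm hq_int hqz x hx
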